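/- Let M be a 1×q pattern vector (a row pattern matrix) and N an r×q pattern matrix, and suppose every entry of the (r+1)×q pattern matrix T = col(M, N) in rows not belonging to a subset S ⊆ {1,...,r+1} with 1 ∉ S is such that, for every column i, either all entries T_{ji} with j ∉ S are 0, or the entries can be chosen to sum to zero (i.e., the symbolic column sum over rows outside S is 0 or ?). Then there exists a real matrix T₀ ∈ P(T) and a real row vector z with z_1 ≠ 0 such that z^T T₀ = 0; in particular, M is not independent of N. -/

import Mathlib

inductive PSym | zero | star | any
deriving DecidableEq

namespace PSym

def symAdd : PSym → PSym → PSym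
  | zero, x => x
  | x, zero => x
  | _, _ => any

def symMul : PSym → PSym → PSym
  | zero, _ => zero
  | _, zero => zero
  | star, star => star
  | _, _ => any

instance : Zero PSym := ⟨zero⟩
instance : Add PSym := ⟨symAdd⟩

instance : AddCommMonoid PSym where
  add_assoc a b c := by cases a <;> cases b <;> cases c <;> rfl
  zero_add a := by cases a <;> rfl
  add_zero a := by cases a <;> rfl
  add_comm a b := by cases a <;> cases b <;> rfl
  nsmul := nsmulRec

end PSym

/-- The pattern class of a pattern matrix. -/
def PatClass {p q : Type*} (M : Matrix p q PSym) : Set (Matrix p q ℝ) :=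
  {A | ∀ i j, (M i j = PSym.zero → A i j = 0) ∧ (M i j = PSym.star → A i j ≠ 0)}

/-- Product of pattern matrices. -/
def patMul {p q s : ℕ} (M : Matrix (Fin p) (Fin q) PSym) (N : Matrix (Fin q) (Fin s) PSym) :
    Matrix (Fin p) (Fin s) PSym :=
  fun i j => ∑ k, PSym.symMul (M i k) (N k j)

/-- A 1×q pattern vector `M` is independent of an r×q pattern matrix `N`. -/
def Independent {q r : ℕ} (M : Matrix (Fin 1) (Fin q) PSym) (N : Matrix (Fin r) (Fin q) PSym) : Prop :=
  ∀ M₀ ∈ PatClass M, ∀ N₀ ∈ PatClass N, ∀ (z₁ : ℝ) (z₂ : Fin r → ℝ),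
    (∀ j, z₁ * M₀ 0 j + ∑ i, z₂ i * N₀ i j = 0) → z₁ = 0

/-- Compatibility of a real value with a pattern symbol. -/
def PCompat (s : PSym) (x : ℝ) : Prop :=
  (s = PSym.zero → x = 0) ∧ (s = PSym.star → x ≠ 0)

lemma step_insert {α : Type*} [DecidableEq α] {A' : Finset α} {f : α → PSym} {a : α}
    (ha : a ∉ A') {t c : ℝ} (hc : PCompat (f a) c)
    (hmk : ∃ v : α → ℝ, (∀ b ∈ A', PCompat (f b) (v b)) ∧ ∑ b ∈ A', v b = t - c) :
    ∃ v : α → ℝ, (∀ b ∈ insert a A', PCompat (f b) (v b)) ∧ ∑ b ∈ insert a A', v b = t := by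
  obtain ⟨v, hv, hvs⟩ := hmk
  refine ⟨Function.update v a c, ?_, ?_⟩
  · intro b hb
    rcases Finset.mem_insert.mp hb with rfl | hb
    · simpa using hc
    · have hba : b ≠ a := fun h => ha (h ▸ hb)
      simpa [Function.update_of_ne hba] using hv b hb
  · rw [Finset.sum_insert ha, Function.update_self, Finset.sum_update_of_notMem ha, hvs]
    ring

/-- Key construction lemma. -/
lemma exists_compat_sum {α : Type*} [DecidableEq α] (A : Finset α) (f : α → PSym) :
    ∀ t : ℝ, ((∑ a ∈ A, f a) = PSym.zero → t = 0) →
      ((∑ a ∈ A, f a) = PSym.star → t ≠ 0) →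
    ∃ v : α → ℝ, (∀ a ∈ A, PCompat (f a) (v a)) ∧ ∑ a ∈ A, v a = t := by
  induction A using Finset.induction with
  | empty =>
      intro t h0 _
      refine ⟨fun _ => 0, by simp, ?_⟩
      simp only [Finset.sum_empty]
      exact (h0 rfl).symm
  | @insert a A' ha ih =>
      intro t h0 h1
      have hsum : (∑ x ∈ insert a A', f x) = PSym.symAdd (f a) (∑ x ∈ A', f x) :=
        Finset.sum_insert ha
      rcases hfa : f a with _ | _ | _ <;> rcases hs' : (∑ x ∈ A', f x) with _ | _ | _ <;>
        rw [hfa, hs'] at hsum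
      · -- zero, zero : total zero
        refine step_insert ha (c := 0) ⟨fun _ => rfl, by simp [hfa]⟩ ?_
        have ht : t = 0 := h0 (by rw [hsum]; rfl)
        exact ih (t - 0) (fun _ => by simp [ht]) (fun h => absurd (hs' ▸ h) (by simp))
      · -- zero, star : total star
        refine step_insert ha (c := 0) ⟨fun _ => rfl, by simp [hfa]⟩ ?_
        have ht : t ≠ 0 := h1 (by rw [hsum]; rfl)
        exact ih (t - 0) (fun h => by simp [h] at hs') (fun _ => by simpa using ht)
      · -- zero, any : total any
        refine step_insert ha (c := 0) ⟨fun _ => rfl, by simp [hfa]⟩ ?_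
        exact ih (t - 0) (fun h => by simp [h] at hs') (fun h => by simp [h] at hs')
      · -- star, zero : total star
        have ht : t ≠ 0 := h1 (by rw [hsum]; rfl)
        refine step_insert ha (c := t) ⟨by simp [hfa], fun _ => ht⟩ ?_
        exact ih (t - t) (fun _ => by ring) (fun h => by simp [h] at hs')
      · -- star, star : total any
        set c : ℝ := if t = 0 then 1 else t / 2 with hcdef
        have hc0 : c ≠ 0 := by
          by_cases h : t = 0 <;> simp [hcdef, h]
        have htc : t - c ≠ 0 := by
          by_cases h : t = 0
          · simp [hcdef, h]
          · simp only [hcdef, if_neg h]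
            intro hh
            apply h
            linarith [sub_eq_zero.mp hh]
        refine step_insert ha (c := c) ⟨by simp [hfa], fun _ => hc0⟩ ?_
        exact ih (t - c) (fun h => by simp [h] at hs') (fun _ => htc)
      · -- star, any : total any
        refine step_insert ha (c := 1) ⟨by simp [hfa], fun _ => one_ne_zero⟩ ?_
        exact ih (t - 1) (fun h => by simp [h] at hs') (fun h => by simp [h] at hs')
      · -- any, zero : total any
        refine step_insert ha (c := t) ⟨by simp [hfa], by simp [hfa]⟩ ?_
        exact ih (t - t) (fun _ => by ring) (fun h => by simp [h] at hs')
      · -- any, star : total any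
        refine step_insert ha (c := t - 1) ⟨by simp [hfa], by simp [hfa]⟩ ?_
        exact ih (t - (t - 1)) (fun h => by simp [h] at hs') (fun _ => by norm_num)
      · -- any, any : total any
        refine step_insert ha (c := 0) ⟨by simp [hfa], by simp [hfa]⟩ ?_
        exact ih (t - 0) (fun h => by simp [h] at hs') (fun h => by simp [h] at hs')

/-- If `S` is a set of rows of `T = col(M, N)` not containing the
first row (the row of `M`), and for every column the symbolic sum of the
entries in the rows outside `S` is not `*` (i.e. it is `0` or `?`), then there
is an instance `T₀ ∈ P(T)` and a row vector `z` with `z 0 ≠ 0` and `zᵀT₀ = 0`;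
in particular `M` is not independent of `N`. -/
theorem exists_kernel_vector_of_symbolic_col_sums {q r : ℕ}
    (M : Matrix (Fin 1) (Fin q) PSym) (N : Matrix (Fin r) (Fin q) PSym)
    (S : Finset (Fin (r + 1))) (hS : (0 : Fin (r + 1)) ∉ S)
    (hcol : ∀ i : Fin q,
      (∑ j ∈ Sᶜ, (Matrix.of (Fin.cons (M 0) N) : Matrix (Fin (r + 1)) (Fin q) PSym) j i)
        ≠ PSym.star) :
    (∃ T₀ ∈ PatClass (Matrix.of (Fin.cons (M 0) N) : Matrix (Fin (r + 1)) (Fin q) PSym),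
      ∃ z : Fin (r + 1) → ℝ, z 0 ≠ 0 ∧ ∀ i : Fin q, ∑ j, z j * T₀ j i = 0) ∧
    ¬ Independent M N := by
  classical
  set T : Matrix (Fin (r + 1)) (Fin q) PSym :=
    (Matrix.of (Fin.cons (M 0) N) : Matrix (Fin (r + 1)) (Fin q) PSym) with hT
  -- per-column construction
  have hv : ∀ i : Fin q, ∃ v : Fin (r + 1) → ℝ,
      (∀ j ∈ Sᶜ, PCompat (T j i) (v j)) ∧ ∑ j ∈ Sᶜ, v j = 0 := by
    intro i
    exact exists_compat_sum Sᶜ (fun j => T j i) 0 (fun _ => rfl)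
      (fun h => absurd h (hcol i))
  choose v hvc hvs using hv
  set T₀ : Matrix (Fin (r + 1)) (Fin q) ℝ :=
    fun j i => if j ∈ S then (if T j i = PSym.star then 1 else 0) else v i j with hT₀
  have hmem : T₀ ∈ PatClass T := by
    intro j i
    by_cases hj : j ∈ S
    · constructor
      · intro h; simp [hT₀, hj, h]
      · intro h; simp [hT₀, hj, h]
    · have hj' : j ∈ Sᶜ := Finset.mem_compl.mpr hj
      have := hvc i j hj'
      constructor
      · intro h; simpa [hT₀, hj] using this.1 h
      · intro h; simpa [hT₀, hj] using this.2 h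
  set z : Fin (r + 1) → ℝ := fun j => if j ∈ S then 0 else 1 with hz
  have hz0 : z 0 = 1 := by simp [hz, hS]
  have hker : ∀ i : Fin q, ∑ j, z j * T₀ j i = 0 := by
    intro i
    have : ∀ j : Fin (r + 1), z j * T₀ j i = if j ∈ Sᶜ then v i j else 0 := by
      intro j
      by_cases hj : j ∈ S <;> simp [hz, hT₀, hj]
    rw [Finset.sum_congr rfl (fun j _ => this j), Finset.sum_ite_mem,
      Finset.univ_inter]
    exact hvs i
  refine ⟨⟨T₀, hmem, z, by rw [hz0]; norm_num, hker⟩, ?_⟩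
  intro hind
  have hM : (fun (_ : Fin 1) j => T₀ 0 j) ∈ PatClass M := by
    intro i j
    have hi : i = 0 := Subsingleton.elim i 0
    have h0 : T 0 j = M 0 j := by simp [hT]; rfl
    subst hi
    have := hmem 0 j
    rw [h0] at this
    exact this
  have hN : (fun (i : Fin r) j => T₀ i.succ j) ∈ PatClass N := by
    intro i j
    have h0 : T i.succ j = N i j := by simp [hT]; rfl
    have := hmem i.succ j
    rw [h0] at this
    exact this
  have := hind _ hM _ hN (z 0) (fun i => z i.succ) (by
    intro j
    have := hker j
    rwa [Fin.sum_univ_succ] at this)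
  rw [hz0] at this
  exact one_ne_zero this
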